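/- The minimum root of the Faddeev-LeVerrier-style min-plus characteristic polynomial ĝ_A(x) = x^n ⊕ c_1 ⊗ x^{n-1} ⊕ ⋯ ⊕ c_n, with coefficients defined recursively by c_k = Tr(A^k ⊕ c_1 ⊗ A^{k-1} ⊕ ⋯ ⊕ c_{k-1} ⊗ A), equals the minimum average weight of a circuit in the network 𝒩(A), hence equals the min-plus eigenvalue of A. -/

import Mathlib

open Finset

/-- Tropical (min-plus) matrix product. -/
def tmul {n : ℕ} (A B : Matrix (Fin n) (Fin n) (WithTop ℝ)) :
    Matrix (Fin n) (Fin n) (WithTop ℝ) :=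
  fun i j => Finset.univ.inf fun l => A i l + B l j

/-- Tropical matrix power (`A¹ = A`, `A^{k+1} = A^k ⊗ A`). -/
def tpow {n : ℕ} (A : Matrix (Fin n) (Fin n) (WithTop ℝ)) : ℕ →
    Matrix (Fin n) (Fin n) (WithTop ℝ)
  | 0 => fun i j => if i = j then 0 else ⊤
  | k + 1 => tmul (tpow A k) A

/-- Tropical trace: the minimum of the diagonal entries. -/
def tTrace {n : ℕ} (M : Matrix (Fin n) (Fin n) (WithTop ℝ)) : WithTop ℝ :=
  Finset.univ.inf fun i => M i i

/-- The affine term `c_j + (n-j)x` of a min-plus polynomial. -/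
def tTerm (n : ℕ) (c : ℕ → WithTop ℝ) (j : ℕ) (x : ℝ) : WithTop ℝ :=
  c j + ((((n - j : ℕ) : ℝ) * x : ℝ) : WithTop ℝ)

/-- `x` is a root (breakpoint) of the min-plus polynomial with coefficients `c`:
the minimum of the affine terms is attained by at least two distinct terms. -/
def IsTropRoot (n : ℕ) (c : ℕ → WithTop ℝ) (x : ℝ) : Prop :=
  ∃ k l, k ≤ n ∧ l ≤ n ∧ k ≠ l ∧
    (∀ j ≤ n, tTerm n c k x ≤ tTerm n c j x) ∧
    (∀ j ≤ n, tTerm n c l x ≤ tTerm n c j x)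

/-- `w` is the average weight of some circuit in the network of `A`. -/
def IsCircuitAvg {n : ℕ} (A : Matrix (Fin n) (Fin n) (WithTop ℝ)) (w : ℝ) : Prop :=
  ∃ (s : ℕ) (f : ℕ → Fin n), 0 < s ∧ f s = f 0 ∧
    (∀ k l, k < s → l < s → f k = f l → k = l) ∧
    ∑ k ∈ range s, A (f k) (f (k + 1)) = (((s : ℝ) * w : ℝ) : WithTop ℝ)

/-- The weight of a walk of length `s` given by vertex sequence `f`. -/
def wSum {n : ℕ} (A : Matrix (Fin n) (Fin n) (WithTop ℝ)) (s : ℕ) (f : ℕ → Fin n) :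
    WithTop ℝ :=
  ∑ k ∈ range s, A (f k) (f (k + 1))

section AuxLemmas
variable {n : ℕ} (A : Matrix (Fin n) (Fin n) (WithTop ℝ))

lemma inf_add_const {ι : Type*} (s : Finset ι) (hs : s.Nonempty) (f : ι → WithTop ℝ)
    (c : WithTop ℝ) : s.inf f + c = s.inf (fun l => f l + c) := by
  obtain ⟨l0, hl0, h0⟩ := Finset.exists_mem_eq_inf s hs f
  apply le_antisymm
  · exact Finset.le_inf fun l hl => add_le_add_left (Finset.inf_le hl) c
  · rw [h0]; exact Finset.inf_le hl0

lemma const_add_inf {ι : Type*} (s : Finset ι) (hs : s.Nonempty) (f : ι → WithTop ℝ)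
    (c : WithTop ℝ) : c + s.inf f = s.inf (fun l => c + f l) := by
  obtain ⟨l0, hl0, h0⟩ := Finset.exists_mem_eq_inf s hs f
  apply le_antisymm
  · exact Finset.le_inf fun l hl => add_le_add_right (Finset.inf_le hl) c
  · rw [h0]; exact Finset.inf_le hl0

lemma tpow_one (hn : 0 < n) : tpow A 1 = A := by
  funext i j
  show Finset.univ.inf (fun l => (if i = l then (0 : WithTop ℝ) else ⊤) + A l j) = A i j
  apply le_antisymm
  · calc Finset.univ.inf (fun l => (if i = l then (0 : WithTop ℝ) else ⊤) + A l j)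
        ≤ (if i = i then (0 : WithTop ℝ) else ⊤) + A i j := Finset.inf_le (mem_univ i)
      _ = A i j := by simp
  · refine Finset.le_inf fun l _ => ?_
    by_cases h : i = l
    · subst h; simp
    · simp [h]

lemma tmul_assoc (hn : 0 < n) (X Y Z : Matrix (Fin n) (Fin n) (WithTop ℝ)) :
    tmul (tmul X Y) Z = tmul X (tmul Y Z) := by
  have hne : (Finset.univ : Finset (Fin n)).Nonempty := by
    simpa using Finset.univ_nonempty_iff.2 (Fin.pos_iff_nonempty.mp hn)
  funext i j
  show Finset.univ.inf (fun l => (Finset.univ.inf fun m => X i m + Y m l) + Z l j)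
      = Finset.univ.inf (fun m => X i m + Finset.univ.inf fun l => Y m l + Z l j)
  apply le_antisymm
  · refine Finset.le_inf fun m _ => ?_
    rw [const_add_inf _ hne]
    refine Finset.le_inf fun l _ => ?_
    calc Finset.univ.inf (fun l => (Finset.univ.inf fun m => X i m + Y m l) + Z l j)
        ≤ (Finset.univ.inf fun m => X i m + Y m l) + Z l j := Finset.inf_le (mem_univ l)
      _ ≤ (X i m + Y m l) + Z l j := add_le_add_left (Finset.inf_le (mem_univ m)) _
      _ = X i m + (Y m l + Z l j) := add_assoc _ _ _
  · refine Finset.le_inf fun l _ => ?_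
    rw [inf_add_const _ hne]
    refine Finset.le_inf fun m _ => ?_
    calc Finset.univ.inf (fun m => X i m + Finset.univ.inf fun l => Y m l + Z l j)
        ≤ X i m + Finset.univ.inf (fun l => Y m l + Z l j) := Finset.inf_le (mem_univ m)
      _ ≤ X i m + (Y m l + Z l j) := add_le_add_right (Finset.inf_le (mem_univ l)) _
      _ = (X i m + Y m l) + Z l j := (add_assoc _ _ _).symm

lemma tmul_tpow (hn : 0 < n) (t : ℕ) : tmul A (tpow A t) = tpow A (t + 1) := by
  induction t with
  | zero =>
    have h1 : tpow A 1 = A := tpow_one A hn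
    rw [h1]
    funext i j
    show Finset.univ.inf (fun l => A i l + (if l = j then (0:WithTop ℝ) else ⊤)) = A i j
    apply le_antisymm
    · calc Finset.univ.inf (fun l => A i l + (if l = j then (0:WithTop ℝ) else ⊤))
          ≤ A i j + (if j = j then (0:WithTop ℝ) else ⊤) := Finset.inf_le (mem_univ j)
        _ = A i j := by simp
    · refine Finset.le_inf fun l _ => ?_
      by_cases h : l = j
      · subst h; simp
      · simp [h]
  | succ t ih =>
    show tmul A (tmul (tpow A t) A) = tmul (tpow A (t+1)) A
    rw [← tmul_assoc hn, ih]

lemma tpow_le_wSum (s : ℕ) (f : ℕ → Fin n) : tpow A s (f 0) (f s) ≤ wSum A s f := by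
  induction s with
  | zero => simp [tpow, wSum]
  | succ s ih =>
    show tmul (tpow A s) A (f 0) (f (s+1)) ≤ _
    calc tmul (tpow A s) A (f 0) (f (s+1))
        ≤ tpow A s (f 0) (f s) + A (f s) (f (s+1)) := Finset.inf_le (mem_univ (f s))
      _ ≤ wSum A s f + A (f s) (f (s+1)) := add_le_add_left ih _
      _ = wSum A (s+1) f := (Finset.sum_range_succ _ s).symm
lemma exists_walk_le_tpow (s : ℕ) (hs : 1 ≤ s) (i j : Fin n) :
    ∃ f : ℕ → Fin n, f 0 = i ∧ f s = j ∧ wSum A s f ≤ tpow A s i j := by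
  induction s generalizing j with
  | zero => omega
  | succ s ih =>
    have hne : (Finset.univ : Finset (Fin n)).Nonempty := ⟨i, mem_univ i⟩
    rcases Nat.eq_zero_or_pos s with hs0 | hs1
    · subst hs0
      refine ⟨fun k => if k = 0 then i else j, by simp, by simp, ?_⟩
      have h1 : wSum A 1 (fun k => if k = 0 then i else j) = A i j := by simp [wSum]
      rw [h1, tpow_one A (Fin.pos_iff_nonempty.mpr ⟨i⟩)]
    · obtain ⟨l, _, hl⟩ := Finset.exists_mem_eq_inf Finset.univ hne
        (fun l => tpow A s i l + A l j)
      obtain ⟨f, hf0, hfs, hfw⟩ := ih hs1 l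
      refine ⟨fun k => if k ≤ s then f k else j, by simp [hf0], by simp, ?_⟩
      have hsum : wSum A (s+1) (fun k => if k ≤ s then f k else j)
          = wSum A s f + A l j := by
        rw [wSum, Finset.sum_range_succ]
        congr 1
        · refine Finset.sum_congr rfl fun k hk => ?_
          have hk' := Finset.mem_range.mp hk
          have h1 : k ≤ s := by omega
          have h2 : k + 1 ≤ s := by omega
          simp [h1, h2]
        · simp [hfs]
      rw [hsum]
      have : tpow A (s+1) i j = tpow A s i l + A l j := hl
      rw [this]
      exact add_le_add_left hfw _
lemma walk_split (f : ℕ → Fin n) (p q s : ℕ) (hpq : p < q) (hqs : q ≤ s)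
    (hf : f p = f q) :
    (fun m => if m ≤ p then f m else f (m + (q - p))) 0 = f 0 ∧
    (fun m => if m ≤ p then f m else f (m + (q - p))) (s - (q - p)) = f s ∧
    wSum A s f = wSum A (s - (q - p)) (fun m => if m ≤ p then f m else f (m + (q - p)))
               + wSum A (q - p) (fun m => f (p + m)) := by
  set d := q - p with hd
  set h : ℕ → Fin n := fun m => if m ≤ p then f m else f (m + d) with hh
  refine ⟨by simp [hh], ?_, ?_⟩
  · by_cases hc : s - d ≤ p
    · have hsp : s - d = p := by omega
      have hsq : s = q := by omega
      simp only [hh, hsp, if_pos le_rfl]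
      rw [hf, hsq]
    · have : s - d + d = s := by omega
      simp only [hh, if_neg hc, this]
  · have e1 : wSum A s f
        = ∑ m ∈ Ico 0 p, A (f m) (f (m+1)) + ∑ m ∈ Ico p q, A (f m) (f (m+1))
          + ∑ m ∈ Ico q s, A (f m) (f (m+1)) := by
      rw [wSum, Finset.range_eq_Ico,
        ← Finset.sum_Ico_consecutive _ (Nat.zero_le q) hqs,
        ← Finset.sum_Ico_consecutive _ (Nat.zero_le p) (le_of_lt hpq)]
    have e2 : wSum A d (fun m => f (p + m)) = ∑ m ∈ Ico p q, A (f m) (f (m+1)) := by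
      rw [wSum, Finset.sum_Ico_eq_sum_range]
      refine Finset.sum_congr rfl fun k hk => ?_
      have : p + k + 1 = p + (k + 1) := by omega
      rw [this]
    have hps : p ≤ s - d := by omega
    have e3 : wSum A (s - d) h
        = ∑ m ∈ Ico 0 p, A (f m) (f (m+1)) + ∑ m ∈ Ico q s, A (f m) (f (m+1)) := by
      rw [wSum, Finset.range_eq_Ico, ← Finset.sum_Ico_consecutive _ (Nat.zero_le p) hps]
      congr 1
      · refine Finset.sum_congr rfl fun m hm => ?_
        have hm' := (Finset.mem_Ico.mp hm).2
        have h1 : m ≤ p := by omega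
        have h2 : m + 1 ≤ p := by omega
        simp only [hh, if_pos h1, if_pos h2]
      · rw [Finset.sum_Ico_eq_sum_range, Finset.sum_Ico_eq_sum_range]
        have hlen : s - d - p = s - q := by omega
        rw [hlen]
        refine Finset.sum_congr rfl fun k hk => ?_
        have hk' := Finset.mem_range.mp hk
        have hb : ¬ (p + k + 1 ≤ p) := by omega
        have hbe : p + k + 1 + d = q + k + 1 := by omega
        rcases Nat.eq_zero_or_pos k with hk0 | hk0
        · subst hk0
          simp only [hh, Nat.add_zero, if_pos le_rfl, if_neg hb, hbe, hf]
        · have ha : ¬ (p + k ≤ p) := by omega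
          have hae : p + k + d = q + k := by omega
          simp only [hh, if_neg ha, if_neg hb, hae, hbe]
    rw [e1, e2, e3]
    exact add_right_comm _ _ _
lemma closed_walk_ge (lam : ℝ) (hlam : ∀ w, IsCircuitAvg A w → lam ≤ w) (s : ℕ) :
    ∀ f : ℕ → Fin n, 0 < s → f s = f 0 →
      (((s : ℝ) * lam : ℝ) : WithTop ℝ) ≤ wSum A s f := by
  induction s using Nat.strong_induction_on with
  | _ s ih =>
    intro f hs hf
    by_cases hinj : ∀ k l, k < s → l < s → f k = f l → k = l
    · rcases eq_or_ne (wSum A s f) ⊤ with ht | ht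
      · rw [ht]; exact le_top
      · obtain ⟨r, hr⟩ := WithTop.ne_top_iff_exists.mp ht
        have hs0 : (s : ℝ) ≠ 0 := Nat.cast_ne_zero.mpr (Nat.pos_iff_ne_zero.mp hs)
        have hca : IsCircuitAvg A (r / s) := by
          refine ⟨s, f, hs, hf, hinj, ?_⟩
          show wSum A s f = _
          rw [← hr]
          congr 1
          field_simp
        have hle := hlam _ hca
        rw [← hr, WithTop.coe_le_coe]
        calc (s : ℝ) * lam ≤ (s : ℝ) * (r / s) :=
              mul_le_mul_of_nonneg_left hle (by positivity)
          _ = r := by field_simp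
    · push_neg at hinj
      obtain ⟨k, l, hk, hl, hfkl, hkl⟩ := hinj
      obtain ⟨p, q, hpq, hq, hfpq⟩ : ∃ p q, p < q ∧ q < s ∧ f p = f q := by
        rcases lt_or_gt_of_ne hkl with h | h
        · exact ⟨k, l, h, hl, hfkl⟩
        · exact ⟨l, k, h, hk, hfkl.symm⟩
      obtain ⟨h0, hse, hsum⟩ := walk_split A f p q s hpq (le_of_lt hq) hfpq
      set d := q - p with hd
      have hd1 : 1 ≤ d := by omega
      have hds : d < s := by omega
      have hg : (((d : ℝ) * lam : ℝ) : WithTop ℝ) ≤ wSum A d (fun m => f (p + m)) := by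
        refine ih d hds _ (by omega) ?_
        show f (p + d) = f (p + 0)
        have : p + d = q := by omega
        rw [this, add_zero, hfpq]
      have hh : (((((s - d : ℕ)) : ℝ) * lam : ℝ) : WithTop ℝ)
          ≤ wSum A (s - d) (fun m => if m ≤ p then f m else f (m + d)) := by
        refine ih (s - d) (by omega) _ (by omega) ?_
        exact hse.trans (hf.trans h0.symm)
      calc (((s : ℝ) * lam : ℝ) : WithTop ℝ)
          = ((((s - d : ℕ) : ℝ) * lam + (d : ℝ) * lam : ℝ) : WithTop ℝ) := by
            congr 1
            have : ((s - d : ℕ) : ℝ) = (s : ℝ) - (d : ℝ) := by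
              push_cast [Nat.cast_sub (le_of_lt hds)]; ring
            rw [this]; ring
        _ = ((((s - d : ℕ) : ℝ) * lam : ℝ) : WithTop ℝ) + (((d : ℝ) * lam : ℝ) : WithTop ℝ) :=
            WithTop.coe_add _ _
        _ ≤ wSum A (s - d) (fun m => if m ≤ p then f m else f (m + d))
            + wSum A d (fun m => f (p + m)) := add_le_add hh hg
        _ = wSum A s f := hsum.symm
lemma diag_ge (lam : ℝ) (hlam : ∀ w, IsCircuitAvg A w → lam ≤ w) (t : ℕ) (ht : 1 ≤ t)
    (i : Fin n) : (((t : ℝ) * lam : ℝ) : WithTop ℝ) ≤ tpow A t i i := by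
  obtain ⟨f, hf0, hft, hfw⟩ := exists_walk_le_tpow A t ht i i
  calc (((t : ℝ) * lam : ℝ) : WithTop ℝ) ≤ wSum A t f :=
        closed_walk_ge A lam hlam t f ht (by rw [hft, hf0])
    _ ≤ tpow A t i i := hfw

lemma c_ge (c : ℕ → WithTop ℝ) (hc0 : c 0 = 0)
    (hc : ∀ k, c (k + 1) =
      tTrace fun i j => (range (k + 1)).inf fun m => c m + tpow A (k + 1 - m) i j)
    (lam : ℝ) (hlam : ∀ w, IsCircuitAvg A w → lam ≤ w) :
    ∀ k : ℕ, (((k : ℝ) * lam : ℝ) : WithTop ℝ) ≤ c k := by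
  intro k
  induction k using Nat.strong_induction_on with
  | _ k ih =>
    match k with
    | 0 => simp [hc0]
    | k + 1 =>
      rw [hc k]
      refine Finset.le_inf fun i _ => Finset.le_inf fun m hm => ?_
      have hm' : m < k + 1 := Finset.mem_range.mp hm
      calc ((((k+1 : ℕ) : ℝ) * lam : ℝ) : WithTop ℝ)
          = ((((m : ℕ) : ℝ) * lam + ((k + 1 - m : ℕ) : ℝ) * lam : ℝ) : WithTop ℝ) := by
            congr 1
            have : ((k + 1 - m : ℕ) : ℝ) = ((k+1 : ℕ) : ℝ) - (m : ℝ) := by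
              push_cast [Nat.cast_sub (by omega : m ≤ k + 1)]; ring
            rw [this]; ring
        _ = ((((m : ℕ) : ℝ) * lam : ℝ) : WithTop ℝ)
            + ((((k + 1 - m : ℕ) : ℝ) * lam : ℝ) : WithTop ℝ) := WithTop.coe_add _ _
        _ ≤ c m + tpow A (k + 1 - m) i i :=
            add_le_add (ih m hm') (diag_ge A lam hlam _ (by omega) i)

lemma c_le_opt (c : ℕ → WithTop ℝ) (hc0 : c 0 = 0)
    (hc : ∀ k, c (k + 1) =
      tTrace fun i j => (range (k + 1)).inf fun m => c m + tpow A (k + 1 - m) i j)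
    (s : ℕ) (f : ℕ → Fin n) (hs : 0 < s) (hclosed : f s = f 0) (x : WithTop ℝ)
    (hsum : wSum A s f = x) : c s ≤ x := by
  obtain ⟨k, rfl⟩ : ∃ k, s = k + 1 := ⟨s - 1, by omega⟩
  rw [hc k]
  calc tTrace (fun i j => (range (k + 1)).inf fun m => c m + tpow A (k + 1 - m) i j)
      ≤ (range (k + 1)).inf (fun m => c m + tpow A (k + 1 - m) (f 0) (f 0)) :=
        Finset.inf_le (mem_univ (f 0))
    _ ≤ c 0 + tpow A (k + 1 - 0) (f 0) (f 0) :=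
        Finset.inf_le (Finset.mem_range.mpr (by omega))
    _ = tpow A (k + 1) (f 0) (f 0) := by rw [hc0, zero_add]; norm_num
    _ ≤ wSum A (k + 1) f := by
        have := tpow_le_wSum A (k + 1) f
        rwa [hclosed] at this
    _ = x := hsum

lemma exists_least_avg (hcirc : ∃ w, IsCircuitAvg A w) :
    ∃ lam, IsLeast {w : ℝ | IsCircuitAvg A w} lam := by
  obtain ⟨w0, hw0⟩ := hcirc
  set F : Fin (n + 1) × (Fin (n + 1) → Fin n) → ℝ := fun p =>
    (WithTop.untopD 0 (∑ k ∈ range p.1.val,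
        A (p.2 ⟨k % (n + 1), Nat.mod_lt _ n.succ_pos⟩)
          (p.2 ⟨(k + 1) % (n + 1), Nat.mod_lt _ n.succ_pos⟩))) / p.1.val
    with hF
  have hfin : {w : ℝ | IsCircuitAvg A w}.Finite := by
    refine Set.Finite.subset (Set.finite_range F) ?_
    rintro w ⟨s, f, hs, hclosed, hinj, hsum⟩
    have hsn : s ≤ n := by
      have := Fintype.card_le_of_injective (fun k : Fin s => f k.val)
        (fun a b hab => Fin.ext (hinj _ _ a.isLt b.isLt hab))
      simpa using this
    refine ⟨(⟨s, by omega⟩, fun k => f k.val), ?_⟩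
    have hsum' : (∑ k ∈ range s,
        A (f (k % (n + 1))) (f ((k + 1) % (n + 1)))) = (((s : ℝ) * w : ℝ) : WithTop ℝ) := by
      rw [← hsum]
      refine Finset.sum_congr rfl fun k hk => ?_
      have hk' := Finset.mem_range.mp hk
      rw [Nat.mod_eq_of_lt (by omega), Nat.mod_eq_of_lt (by omega)]
    simp only [hF]
    rw [hsum', WithTop.untopD_coe]
    have hs0 : (s : ℝ) ≠ 0 := Nat.cast_ne_zero.mpr (Nat.pos_iff_ne_zero.mp hs)
    field_simp
  obtain ⟨a, ha, hmin⟩ := Set.exists_min_image _ id hfin ⟨w0, hw0⟩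
  exact ⟨a, ha, hmin⟩
lemma coe_add_shuffle (X : WithTop ℝ) (a b c : ℝ) (h : a + b = c) :
    (a : WithTop ℝ) + (X + (b : WithTop ℝ)) = X + (c : WithTop ℝ) := by
  rw [add_left_comm, ← WithTop.coe_add, h]

lemma add_coe_coe (X : WithTop ℝ) (a b c : ℝ) (h : a + b = c) :
    (X + (a : WithTop ℝ)) + (b : WithTop ℝ) = X + (c : WithTop ℝ) := by
  rw [add_assoc, ← WithTop.coe_add, h]

lemma shorten (lam : ℝ) (hlam : ∀ w, IsCircuitAvg A w → lam ≤ w) (hn : 0 < n)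
    (j : Fin n) (t : ℕ) (ht : 1 ≤ t) (i : Fin n) :
    ∃ t', 1 ≤ t' ∧ t' ≤ n ∧
      tpow A t' i j + ((-((t' : ℕ) : ℝ) * lam : ℝ) : WithTop ℝ)
        ≤ tpow A t i j + ((-((t : ℕ) : ℝ) * lam : ℝ) : WithTop ℝ) := by
  induction t using Nat.strong_induction_on generalizing i with
  | _ t ih =>
    rcases le_or_gt t n with htn | htn
    · exact ⟨t, ht, htn, le_rfl⟩
    · obtain ⟨f, hf0, hft, hfw⟩ := exists_walk_le_tpow A t ht i j
      obtain ⟨a, b, hab, hfab⟩ : ∃ a b : Fin (n + 1), a ≠ b ∧ f a.val = f b.val := by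
        obtain ⟨a, b, hab, h⟩ := Fintype.exists_ne_map_eq_of_card_lt
          (fun k : Fin (n + 1) => f k.val) (by simp)
        exact ⟨a, b, hab, h⟩
      obtain ⟨p, q, hpq, hq, hfpq⟩ : ∃ p q : ℕ, p < q ∧ q ≤ n ∧ f p = f q := by
        rcases lt_or_gt_of_ne hab with h | h
        · exact ⟨a.val, b.val, h, by omega, hfab⟩
        · exact ⟨b.val, a.val, h, by omega, hfab.symm⟩
      obtain ⟨h0, hse, hsum⟩ := walk_split A f p q t hpq (by omega) hfpq
      set d := q - p with hd
      have hd1 : 1 ≤ d := by omega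
      have hdn : d ≤ n := by omega
      have hdt : d < t := by omega
      have hg : (((d : ℝ) * lam : ℝ) : WithTop ℝ) ≤ wSum A d (fun m => f (p + m)) := by
        refine closed_walk_ge A lam hlam d _ (by omega) ?_
        show f (p + d) = f (p + 0)
        have : p + d = q := by omega
        rw [this, add_zero, hfpq]
      have hshort : tpow A (t - d) i j ≤ wSum A (t - d)
          (fun m => if m ≤ p then f m else f (m + d)) := by
        have this1 := tpow_le_wSum A (t - d) (fun m => if m ≤ p then f m else f (m + d))
        have e1 : tpow A (t - d) i j
            = tpow A (t - d) ((fun m => if m ≤ p then f m else f (m + d)) 0)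
              ((fun m => if m ≤ p then f m else f (m + d)) (t - d)) := by
          rw [h0, hse, hf0, hft]
        rw [e1]
        exact this1
      have key : tpow A (t - d) i j + (((d : ℝ) * lam : ℝ) : WithTop ℝ) ≤ tpow A t i j := by
        calc tpow A (t - d) i j + (((d : ℝ) * lam : ℝ) : WithTop ℝ)
            ≤ wSum A (t - d) (fun m => if m ≤ p then f m else f (m + d))
              + wSum A d (fun m => f (p + m)) := add_le_add hshort hg
          _ = wSum A t f := hsum.symm
          _ ≤ tpow A t i j := hfw
      have key2 : tpow A (t - d) i j + ((-(((t - d : ℕ)) : ℝ) * lam : ℝ) : WithTop ℝ)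
          ≤ tpow A t i j + ((-((t : ℕ) : ℝ) * lam : ℝ) : WithTop ℝ) := by
        have e : tpow A (t - d) i j + ((-(((t - d : ℕ)) : ℝ) * lam : ℝ) : WithTop ℝ)
            = (tpow A (t - d) i j + (((d : ℝ) * lam : ℝ) : WithTop ℝ))
              + ((-((t : ℕ) : ℝ) * lam : ℝ) : WithTop ℝ) := by
          rw [add_coe_coe _ _ _ (-(((t - d : ℕ)) : ℝ) * lam)]
          have : ((t - d : ℕ) : ℝ) = (t : ℝ) - (d : ℝ) := by
            push_cast [Nat.cast_sub (le_of_lt hdt)]; ring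
          rw [this]; ring
        rw [e]
        exact add_le_add_left key _
      obtain ⟨t', ht'1, ht'n, ht'le⟩ := ih (t - d) (by omega) (by omega) i
      exact ⟨t', ht'1, ht'n, le_trans ht'le key2⟩

lemma eigen (lam : ℝ) (hlam : ∀ w, IsCircuitAvg A w → lam ≤ w)
    (s : ℕ) (f : ℕ → Fin n) (hs : 0 < s) (hsn : s ≤ n) (hclosed : f s = f 0)
    (hsum : wSum A s f = (((s : ℝ) * lam : ℝ) : WithTop ℝ)) :
    ∃ v : Fin n → WithTop ℝ, (∃ i, v i ≠ ⊤) ∧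
      ∀ i, Finset.univ.inf (fun j => A i j + v j) = (lam : WithTop ℝ) + v i := by
  have hn : 0 < n := by omega
  set i0 := f 0 with hi0
  set v : Fin n → WithTop ℝ :=
    fun i => (Finset.Icc 1 n).inf fun t => tpow A t i i0 + ((-(t : ℝ) * lam : ℝ) : WithTop ℝ)
    with hv
  have hIcc : (Finset.Icc 1 n).Nonempty := ⟨1, Finset.mem_Icc.mpr ⟨le_rfl, hn⟩⟩
  have huniv : (Finset.univ : Finset (Fin n)).Nonempty := ⟨i0, mem_univ i0⟩
  have hvle : ∀ t, 1 ≤ t → ∀ i, v i ≤ tpow A t i i0 + ((-(t : ℝ) * lam : ℝ) : WithTop ℝ) := by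
    intro t ht i
    obtain ⟨t', ht'1, ht'n, ht'le⟩ := shorten A lam hlam hn i0 t ht i
    exact le_trans (Finset.inf_le (Finset.mem_Icc.mpr ⟨ht'1, ht'n⟩)) ht'le
  have hvi0 : v i0 ≤ 0 := by
    have h1 : tpow A s i0 i0 ≤ (((s : ℝ) * lam : ℝ) : WithTop ℝ) := by
      have := tpow_le_wSum A s f
      rwa [hclosed, ← hi0, hsum] at this
    calc v i0 ≤ tpow A s i0 i0 + ((-(s : ℝ) * lam : ℝ) : WithTop ℝ) :=
          Finset.inf_le (Finset.mem_Icc.mpr ⟨hs, hsn⟩)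
      _ ≤ (((s : ℝ) * lam : ℝ) : WithTop ℝ) + ((-(s : ℝ) * lam : ℝ) : WithTop ℝ) :=
          add_le_add_left h1 _
      _ = 0 := by rw [← WithTop.coe_add]; norm_num
  refine ⟨v, ⟨i0, ne_top_of_le_ne_top (by simp) hvi0⟩, fun i => ?_⟩
  apply le_antisymm
  · -- inf ≤ lam + v i
    obtain ⟨ts, hts, htseq⟩ := Finset.exists_mem_eq_inf _ hIcc
      (fun t => tpow A t i i0 + ((-(t : ℝ) * lam : ℝ) : WithTop ℝ))
    obtain ⟨hts1, htsn⟩ := Finset.mem_Icc.mp hts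
    obtain ⟨u, rfl⟩ : ∃ u, ts = u + 1 := ⟨ts - 1, by omega⟩
    have hvi : v i = tpow A (u + 1) i i0 + ((-((u+1 : ℕ) : ℝ) * lam : ℝ) : WithTop ℝ) := htseq
    rcases Nat.eq_zero_or_pos u with hu0 | hu1
    · subst hu0
      have hvi' : v i = A i i0 + ((-lam : ℝ) : WithTop ℝ) := by
        rw [hvi, tpow_one A hn]; norm_num
      have hlv : (lam : WithTop ℝ) + v i = A i i0 := by
        rw [hvi', coe_add_shuffle _ lam (-lam) 0 (by ring), WithTop.coe_zero, add_zero]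
      rw [hlv]
      calc Finset.univ.inf (fun j => A i j + v j) ≤ A i i0 + v i0 :=
            Finset.inf_le (mem_univ i0)
        _ ≤ A i i0 + 0 := add_le_add_right hvi0 _
        _ = A i i0 := add_zero _
    · have hexp : tpow A (u + 1) i i0 = Finset.univ.inf (fun l => A i l + tpow A u l i0) := by
        rw [← tmul_tpow A hn u]; rfl
      obtain ⟨l0, _, hl0⟩ := Finset.exists_mem_eq_inf _ huniv (fun l => A i l + tpow A u l i0)
      have hvl0 : v l0 ≤ tpow A u l0 i0 + ((-(u : ℝ) * lam : ℝ) : WithTop ℝ) :=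
        Finset.inf_le (Finset.mem_Icc.mpr ⟨hu1, by omega⟩)
      have hlv : (lam : WithTop ℝ) + v i
          = (A i l0 + tpow A u l0 i0) + ((-(u : ℝ) * lam : ℝ) : WithTop ℝ) := by
        rw [hvi, hexp, hl0, coe_add_shuffle _ lam _ (-(u : ℝ) * lam) (by push_cast; ring)]
      rw [hlv]
      calc Finset.univ.inf (fun j => A i j + v j) ≤ A i l0 + v l0 :=
            Finset.inf_le (mem_univ l0)
        _ ≤ A i l0 + (tpow A u l0 i0 + ((-(u : ℝ) * lam : ℝ) : WithTop ℝ)) :=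
            add_le_add_right hvl0 _
        _ = (A i l0 + tpow A u l0 i0) + ((-(u : ℝ) * lam : ℝ) : WithTop ℝ) :=
            (add_assoc _ _ _).symm
  · -- lam + v i ≤ inf
    refine Finset.le_inf fun j _ => ?_
    have hexpand : A i j + v j = (Finset.Icc 1 n).inf
        (fun t => A i j + (tpow A t j i0 + ((-(t : ℝ) * lam : ℝ) : WithTop ℝ))) := by
      rw [hv]
      exact const_add_inf _ hIcc _ _
    rw [hexpand]
    refine Finset.le_inf fun t htmem => ?_
    obtain ⟨ht1, htn⟩ := Finset.mem_Icc.mp htmem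
    have h1 : tpow A (t + 1) i i0 ≤ A i j + tpow A t j i0 := by
      have hexp : tpow A (t + 1) i i0 = Finset.univ.inf (fun l => A i l + tpow A t l i0) := by
        rw [← tmul_tpow A hn t]; rfl
      rw [hexp]
      exact Finset.inf_le (mem_univ j)
    have h2 : v i ≤ tpow A (t + 1) i i0 + ((-((t+1 : ℕ) : ℝ) * lam : ℝ) : WithTop ℝ) :=
      hvle (t + 1) (by omega) i
    calc (lam : WithTop ℝ) + v i
        ≤ (lam : WithTop ℝ) + (tpow A (t + 1) i i0 + ((-((t+1 : ℕ) : ℝ) * lam : ℝ) : WithTop ℝ)) :=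
          add_le_add_right h2 _
      _ = tpow A (t + 1) i i0 + ((-(t : ℝ) * lam : ℝ) : WithTop ℝ) :=
          coe_add_shuffle _ lam _ (-(t : ℝ) * lam) (by push_cast; ring)
      _ ≤ (A i j + tpow A t j i0) + ((-(t : ℝ) * lam : ℝ) : WithTop ℝ) :=
          add_le_add_left h1 _
      _ = A i j + (tpow A t j i0 + ((-(t : ℝ) * lam : ℝ) : WithTop ℝ)) := add_assoc _ _ _

end AuxLemmas


/-- Let `ĝ_A(x) = xⁿ ⊕ c₁ ⊗ xⁿ⁻¹ ⊕ ⋯ ⊕ cₙ` be the Faddeev–LeVerrier-style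
min-plus characteristic polynomial, with coefficients defined recursively by
`c_k = Tr(A^k ⊕ c₁ ⊗ A^{k-1} ⊕ ⋯ ⊕ c_{k-1} ⊗ A)` (`c₀ = 0`). If the network of
`A` contains a circuit, then the minimum root of `ĝ_A` equals the minimum
circuit average weight, and it is a min-plus eigenvalue of `A`. -/
theorem flv_min_root_eq_min_circuit_avg_and_eigenvalue {n : ℕ}
    (A : Matrix (Fin n) (Fin n) (WithTop ℝ)) (c : ℕ → WithTop ℝ)
    (hc0 : c 0 = 0)
    (hc : ∀ k, c (k + 1) =
      tTrace fun i j => (range (k + 1)).inf fun m => c m + tpow A (k + 1 - m) i j)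
    (hcirc : ∃ w, IsCircuitAvg A w) :
    ∃ lam : ℝ,
      IsLeast {w : ℝ | IsCircuitAvg A w} lam ∧
      IsLeast {x : ℝ | IsTropRoot n c x} lam ∧
      ∃ v : Fin n → WithTop ℝ, (∃ i, v i ≠ ⊤) ∧
        ∀ i, Finset.univ.inf (fun j => A i j + v j) = (lam : WithTop ℝ) + v i := by
  obtain ⟨lam, hL⟩ := exists_least_avg A hcirc
  have hlam : ∀ w, IsCircuitAvg A w → lam ≤ w := fun w hw => hL.2 hw
  obtain ⟨s, f, hs, hclosed, hinj, hsum⟩ := hL.1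
  have hsum' : wSum A s f = (((s : ℝ) * lam : ℝ) : WithTop ℝ) := hsum
  have hsn : s ≤ n := by
    have := Fintype.card_le_of_injective (fun k : Fin s => f k.val)
      (fun a b hab => Fin.ext (hinj _ _ a.isLt b.isLt hab))
    simpa using this
  have hcge := c_ge A c hc0 hc lam hlam
  have hcs : c s = (((s : ℝ) * lam : ℝ) : WithTop ℝ) :=
    le_antisymm (c_le_opt A c hc0 hc s f hs hclosed _ hsum') (hcge s)
  -- key bound for terms at lam
  have hkey : ∀ j ≤ n, (((n : ℝ) * lam : ℝ) : WithTop ℝ) ≤ tTerm n c j lam := by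
    intro j hj
    have hcast : ((n - j : ℕ) : ℝ) = (n : ℝ) - (j : ℝ) := by
      push_cast [Nat.cast_sub hj]; ring
    calc (((n : ℝ) * lam : ℝ) : WithTop ℝ)
        = (((j : ℝ) * lam : ℝ) : WithTop ℝ) + ((((n - j : ℕ) : ℝ) * lam : ℝ) : WithTop ℝ) := by
          rw [← WithTop.coe_add]
          congr 1
          rw [hcast]; ring
      _ ≤ c j + ((((n - j : ℕ) : ℝ) * lam : ℝ) : WithTop ℝ) := add_le_add_left (hcge j) _
      _ = tTerm n c j lam := rfl
  have hterm0 : tTerm n c 0 lam = (((n : ℝ) * lam : ℝ) : WithTop ℝ) := by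
    rw [tTerm, hc0, zero_add]
    norm_num
  have hterms : tTerm n c s lam = (((n : ℝ) * lam : ℝ) : WithTop ℝ) := by
    rw [tTerm, hcs, ← WithTop.coe_add]
    congr 1
    have hcast : ((n - s : ℕ) : ℝ) = (n : ℝ) - (s : ℝ) := by
      push_cast [Nat.cast_sub hsn]; ring
    rw [hcast]; ring
  refine ⟨lam, ⟨⟨s, f, hs, hclosed, hinj, hsum⟩, hL.2⟩, ⟨?_, ?_⟩,
    eigen A lam hlam s f hs hsn hclosed hsum'⟩
  · -- lam is a root
    refine ⟨0, s, Nat.zero_le n, hsn, by omega, fun j hj => ?_, fun j hj => ?_⟩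
    · rw [hterm0]; exact hkey j hj
    · rw [hterms]; exact hkey j hj
  · -- lam is a lower bound on roots
    rintro x ⟨k, l, hk, hl, hkl, hmink, hminl⟩
    by_contra hx
    push_neg at hx
    obtain ⟨m, hmn, hm0, hmin⟩ : ∃ m, m ≤ n ∧ m ≠ 0 ∧ ∀ j ≤ n, tTerm n c m x ≤ tTerm n c j x := by
      rcases Nat.eq_zero_or_pos k with hk0 | hk0
      · exact ⟨l, hl, by omega, hminl⟩
      · exact ⟨k, hk, by omega, hmink⟩
    have h1 : tTerm n c m x ≤ tTerm n c 0 x := hmin 0 (Nat.zero_le n)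
    have h2 : tTerm n c 0 x = (((n : ℝ) * x : ℝ) : WithTop ℝ) := by
      rw [tTerm, hc0, zero_add]; norm_num
    have hcast : ((n - m : ℕ) : ℝ) = (n : ℝ) - (m : ℝ) := by
      push_cast [Nat.cast_sub hmn]; ring
    have h3 : (((n : ℝ) * x : ℝ) : WithTop ℝ) < tTerm n c m x := by
      calc (((n : ℝ) * x : ℝ) : WithTop ℝ)
          < (((m : ℝ) * lam + ((n - m : ℕ) : ℝ) * x : ℝ) : WithTop ℝ) := by
            rw [WithTop.coe_lt_coe, hcast]
            have hm1 : (1 : ℝ) ≤ (m : ℝ) := by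
              exact_mod_cast Nat.one_le_iff_ne_zero.mpr hm0
            nlinarith
        _ = (((m : ℝ) * lam : ℝ) : WithTop ℝ) + ((((n - m : ℕ) : ℝ) * x : ℝ) : WithTop ℝ) :=
            WithTop.coe_add _ _
        _ ≤ c m + ((((n - m : ℕ) : ℝ) * x : ℝ) : WithTop ℝ) := add_le_add_left (hcge m) _
        _ = tTerm n c m x := rfl
    rw [h2] at h1
    exact absurd (lt_of_lt_of_le h3 h1) (lt_irrefl _)
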